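/- Fix the log-SNR reparameterization λ_t = log(α_t/σ_t) with σ_t > 0 and α_t > 0. If x_t satisfies the diffusion ODE dx_t/dt = (f(t) + g²(t)/(2σ_t²)) x_t - (α_t g²(t)/(2σ_t²)) x_θ(x_t, t), where f(t) = d log α_t/dt and g²(t) = dσ_t²/dt - 2 (d log α_t/dt) σ_t², then the function u(t) = x_t/σ_t satisfies du/dt = e^{λ_t} (dλ_t/dt) x_θ(x_t, t); equivalently, x_t = (σ_t/σ_s) x_s + σ_t ∫_{λ_s}^{λ_t} e^{λ} x_θ(x_λ, λ) dλ. -/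

import Mathlib

open intervalIntegral

/-- Exponential-integrator form of the diffusion ODE: if `x` solves the diffusion ODE
with `f(t) = d log α_t/dt` and `g²(t) = dσ_t²/dt - 2 (d log α_t/dt) σ_t²`, then
`u(t) = x_t/σ_t` satisfies `du/dt = e^{λ_t} (dλ_t/dt) x_θ(x_t, t)`; equivalently
`x_t = (σ_t/σ_s) x_s + σ_t ∫_{λ_s}^{λ_t} e^λ x_θ(x_λ, λ) dλ` (written as a `t`-integral
via the change of variables `λ = λ_r`). -/
theorem diffusion_ode_exponential_integrator {D : ℕ} (T : ℝ) (hT : 0 < T)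
    (α σ : ℝ → ℝ) (hα : Differentiable ℝ α) (hσ : Differentiable ℝ σ)
    (hαpos : ∀ t, 0 < α t) (hσpos : ∀ t, 0 < σ t)
    (lam : ℝ → ℝ) (hlam : ∀ t, lam t = Real.log (α t / σ t))
    (hanti : StrictAntiOn lam (Set.Icc 0 T))
    (hlam' : Continuous (fun t => deriv lam t))
    (x : ℝ → EuclideanSpace ℝ (Fin D)) (hx : Differentiable ℝ x)
    (xθ : EuclideanSpace ℝ (Fin D) → ℝ → EuclideanSpace ℝ (Fin D))
    (hxθ : Continuous (fun t => xθ (x t) t))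
    (fd g2 : ℝ → ℝ)
    (hfd : ∀ t, fd t = deriv (fun s => Real.log (α s)) t)
    (hg2 : ∀ t, g2 t = deriv (fun s => (σ s) ^ 2) t - 2 * fd t * (σ t) ^ 2)
    (hODE : ∀ t ∈ Set.Icc 0 T, HasDerivAt x
      ((fd t + g2 t / (2 * (σ t) ^ 2)) • x t
        - (α t * g2 t / (2 * (σ t) ^ 2)) • xθ (x t) t) t)
    (u : ℝ → EuclideanSpace ℝ (Fin D)) (hu : ∀ t, u t = (σ t)⁻¹ • x t) :
    (∀ t ∈ Set.Icc 0 T, HasDerivAt u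
        ((Real.exp (lam t) * deriv lam t) • xθ (x t) t) t) ∧
      ∀ s ∈ Set.Icc 0 T, ∀ t ∈ Set.Icc 0 T,
        x t = (σ t / σ s) • x s
          + σ t • ∫ r in s..t, (Real.exp (lam r) * deriv lam r) • xθ (x r) r := by
  have hαne : ∀ t, α t ≠ 0 := fun t => (hαpos t).ne'
  have hσne : ∀ t, σ t ≠ 0 := fun t => (hσpos t).ne'
  have hlamfun : lam = fun t => Real.log (α t) - Real.log (σ t) := by
    funext t; rw [hlam t, Real.log_div (hαne t) (hσne t)]
  have hlamderiv : ∀ t, HasDerivAt lam (deriv α t / α t - deriv σ t / σ t) t := by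
    intro t
    rw [hlamfun]
    exact ((hα t).hasDerivAt.log (hαne t)).sub ((hσ t).hasDerivAt.log (hσne t))
  have hderivlam : ∀ t, deriv lam t = deriv α t / α t - deriv σ t / σ t :=
    fun t => (hlamderiv t).deriv
  have hexplam : ∀ t, Real.exp (lam t) = α t / σ t := by
    intro t; rw [hlam t, Real.exp_log (div_pos (hαpos t) (hσpos t))]
  have hfd' : ∀ t, fd t = deriv α t / α t := by
    intro t
    rw [hfd t, ((hα t).hasDerivAt.log (hαne t)).deriv]
  have hg2' : ∀ t, g2 t = 2 * σ t * deriv σ t - 2 * (deriv α t / α t) * (σ t) ^ 2 := by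
    intro t
    have h1 : HasDerivAt (fun s => (σ s) ^ 2) (2 * σ t * deriv σ t) t := by
      have := (hσ t).hasDerivAt.pow 2
      refine this.congr_deriv ?_
      simp only [Nat.cast_ofNat]
      ring
    rw [hg2 t, h1.deriv, hfd' t]
  have hufun : u = fun r => (σ r)⁻¹ • x r := funext hu
  have hu' : ∀ t ∈ Set.Icc (0:ℝ) T, HasDerivAt u
      ((Real.exp (lam t) * deriv lam t) • xθ (x t) t) t := by
    intro t ht
    have hσd : HasDerivAt (fun r => (σ r)⁻¹) (-(deriv σ t) / (σ t) ^ 2) t :=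
      (hσ t).hasDerivAt.inv (hσne t)
    have hkey := hσd.smul (hODE t ht)
    rw [hufun]
    refine hkey.congr_deriv ?_
    symm
    have hs0 := hσne t
    have ha0 := hαne t
    rw [smul_sub, smul_smul, smul_smul]
    have e1 : -(deriv σ t) / (σ t) ^ 2 + (σ t)⁻¹ * (fd t + g2 t / (2 * (σ t) ^ 2)) = 0 := by
      have hs0 := hσne t
      have ha0 := hαne t
      rw [hfd' t, hg2' t]
      field_simp
      ring
    have e2 : (σ t)⁻¹ * (α t * g2 t / (2 * (σ t) ^ 2))
        = -(Real.exp (lam t) * deriv lam t) := by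
      have hs0 := hσne t
      have ha0 := hαne t
      rw [hg2' t, hexplam t, hderivlam t]
      field_simp
      ring
    rw [e2]
    rw [show ((((σ t)⁻¹ * (fd t + g2 t / (2 * (σ t) ^ 2))) • x t
          - (-(Real.exp (lam t) * deriv lam t)) • xθ (x t) t)
        + (-(deriv σ t) / (σ t) ^ 2) • x t)
      = ((-(deriv σ t) / (σ t) ^ 2) + (σ t)⁻¹ * (fd t + g2 t / (2 * (σ t) ^ 2))) • x t
          + (Real.exp (lam t) * deriv lam t) • xθ (x t) t by
        rw [add_smul, neg_smul]; abel]
    rw [e1, zero_smul, zero_add]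
  refine ⟨hu', ?_⟩
  have hdl : Differentiable ℝ lam := fun t => (hlamderiv t).differentiableAt
  have hlamc : Continuous lam := hdl.continuous
  have hcont : Continuous (fun r => (Real.exp (lam r) * deriv lam r) • xθ (x r) r) :=
    ((Real.continuous_exp.comp hlamc).mul hlam').smul hxθ
  intro s hs t ht
  have h0T : Set.uIcc (0:ℝ) T = Set.Icc 0 T := Set.uIcc_of_le hT.le
  have hsub : Set.uIcc s t ⊆ Set.Icc 0 T := by
    rw [← h0T]
    exact Set.uIcc_subset_uIcc (h0T ▸ hs) (h0T ▸ ht)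
  have hftc := intervalIntegral.integral_eq_sub_of_hasDerivAt
    (fun r hr => hu' r (hsub hr)) (hcont.intervalIntegrable s t)
  rw [hftc, hu t, hu s]
  rw [smul_sub, smul_smul, smul_smul, mul_inv_cancel₀ (hσne t), one_smul,
    ← div_eq_mul_inv]
  abel
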